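/- Let w_1,...,w_r be vectors in ℕ^n such that the set {w_1,...,w_r} is downward closed in ℕ^n (i.e., if 0 ≤ α ≤ w_i coordinatewise for some i and α ∈ ℕ^n, then α ∈ {w_1,...,w_r}). Then conv(w_1,...,w_r) = ℝ₊^n ∩ (conv(w_1,...,w_r) + cone(-e_1,...,-e_n)), i.e., the convex hull equals the set of nonnegative vectors that lie below some convex combination of the w_i. -/

import Mathlib

/-- The cone generated by the negative unit vectors `-e₁,…,-eₙ` in `ℝⁿ`. -/
def negUnitCone (n : ℕ) : Set (Fin n → ℝ) :=
  {z | ∃ δ : Fin n → ℝ, (∀ j, 0 ≤ δ j) ∧ z = ∑ j, δ j • (-(Pi.single j 1 : Fin n → ℝ))}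

section aux
variable {n : ℕ} {W : Set (Fin n → ℝ)}

/-- zeroing a coordinate, as a linear map -/
noncomputable def zeroAt (n : ℕ) (j : Fin n) : (Fin n → ℝ) →ₗ[ℝ] (Fin n → ℝ) :=
  LinearMap.id - (LinearMap.proj j).smulRight (Pi.single j 1)

lemma zeroAt_apply (j : Fin n) (x : Fin n → ℝ) :
    zeroAt n j x = Function.update x j 0 := by
  funext k
  simp only [zeroAt, LinearMap.sub_apply, LinearMap.id_apply, LinearMap.smulRight_apply,
    LinearMap.proj_apply, Pi.sub_apply, Pi.smul_apply, smul_eq_mul]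
  by_cases h : k = j
  · subst h; simp [Function.update_self, Pi.single_apply]
  · simp [Function.update_of_ne h, Pi.single_apply, Ne.symm h]

lemma zero_mem_hull (hW : ∀ j, ∀ x ∈ W, Function.update x j 0 ∈ W)
    (j : Fin n) {y : Fin n → ℝ} (hy : y ∈ convexHull ℝ W) :
    Function.update y j 0 ∈ convexHull ℝ W := by
  have h1 : zeroAt n j y ∈ zeroAt n j '' convexHull ℝ W := ⟨y, hy, rfl⟩
  rw [LinearMap.image_convexHull] at h1
  rw [← zeroAt_apply]
  refine convexHull_mono ?_ h1
  rintro _ ⟨x, hx, rfl⟩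
  rw [zeroAt_apply]
  exact hW j x hx

lemma lower_mem_hull (hW : ∀ j, ∀ x ∈ W, Function.update x j 0 ∈ W)
    (j : Fin n) {y : Fin n → ℝ} (hy : y ∈ convexHull ℝ W) {c : ℝ}
    (hc0 : 0 ≤ c) (hcy : c ≤ y j) :
    Function.update y j c ∈ convexHull ℝ W := by
  rcases eq_or_lt_of_le hcy with h | h
  · rcases eq_or_lt_of_le hc0 with h0 | h0
    · rw [← h0]; exact zero_mem_hull hW j hy
    · have : Function.update y j c = y := by
        funext k; by_cases hk : k = j
        · subst hk; simp [h]
        · simp [Function.update_of_ne hk]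
      rw [this]; exact hy
  · have hyj : 0 < y j := lt_of_le_of_lt hc0 h
    set t : ℝ := c / y j with ht
    have ht0 : 0 ≤ t := div_nonneg hc0 hyj.le
    have ht1 : t ≤ 1 := (div_le_one hyj).2 hcy
    have key : Function.update y j c = t • y + (1 - t) • Function.update y j 0 := by
      funext k
      by_cases hk : k = j
      · subst hk
        simp only [Function.update_self, Pi.add_apply, Pi.smul_apply, smul_eq_mul]
        rw [ht]
        field_simp
        ring
      · simp only [Function.update_of_ne hk, Pi.add_apply, Pi.smul_apply, smul_eq_mul]
        ring
    rw [key]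
    exact (convex_convexHull ℝ W) hy (zero_mem_hull hW j hy) ht0 (by linarith) (by ring)

lemma below_mem_hull (hW : ∀ j, ∀ x ∈ W, Function.update x j 0 ∈ W)
    {x y : Fin n → ℝ} (hy : y ∈ convexHull ℝ W) (hx0 : 0 ≤ x) (hxy : x ≤ y) :
    x ∈ convexHull ℝ W := by
  have main : ∀ s : Finset (Fin n), s.piecewise x y ∈ convexHull ℝ W := by
    intro s
    induction s using Finset.induction_on with
    | empty => simpa using hy
    | insert j s hj ih =>
      rw [Finset.piecewise_insert]
      refine lower_mem_hull hW j ih (hx0 j) ?_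
      rw [Finset.piecewise_eq_of_notMem _ _ _ hj]
      exact hxy j
  have := main Finset.univ
  simpa using this

end aux

/-- if `{w₁,…,w_r} ⊆ ℕⁿ` is downward closed, then
`conv(w₁,…,w_r) = ℝ₊ⁿ ∩ (conv(w₁,…,w_r) + ℝ₊{-e₁,…,-eₙ})`. -/
theorem stmt0 (n r : ℕ) (w : Fin r → Fin n → ℕ)
    (hdc : ∀ α : Fin n → ℕ, (∃ i, α ≤ w i) → ∃ i, α = w i) :
    convexHull ℝ {x : Fin n → ℝ | ∃ i, x = fun j => (w i j : ℝ)} =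
      {x : Fin n → ℝ | 0 ≤ x} ∩
        {x | ∃ y ∈ convexHull ℝ {x : Fin n → ℝ | ∃ i, x = fun j => (w i j : ℝ)},
          ∃ z ∈ negUnitCone n, x = y + z} := by
  set W : Set (Fin n → ℝ) := {x : Fin n → ℝ | ∃ i, x = fun j => (w i j : ℝ)} with hWdef
  have hW : ∀ j, ∀ x ∈ W, Function.update x j 0 ∈ W := by
    rintro j _ ⟨i, rfl⟩
    obtain ⟨i', hi'⟩ := hdc (Function.update (w i) j 0) ⟨i, fun k => by
      by_cases hk : k = j
      · subst hk; simp
      · simp [Function.update_of_ne hk]⟩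
    refine ⟨i', ?_⟩
    funext k
    by_cases hk : k = j
    · subst hk
      have h2 := congrFun hi' k
      simp only [Function.update_self] at h2
      simp only [Function.update_self]
      exact_mod_cast h2
    · have := congrFun hi' k
      rw [Function.update_of_ne hk] at this ⊢
      exact_mod_cast congrArg (Nat.cast : ℕ → ℝ) this
  ext x
  constructor
  · intro hx
    constructor
    · -- nonnegativity
      have : convexHull ℝ W ⊆ {x : Fin n → ℝ | 0 ≤ x} := by
        apply convexHull_min
        · rintro _ ⟨i, rfl⟩ k
          positivity
        · intro a ha b hb s t hs ht hst k
          simpa using add_nonneg (mul_nonneg hs (ha k)) (mul_nonneg ht (hb k))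
      exact this hx
    · exact ⟨x, hx, 0, ⟨0, fun j => le_refl 0, by simp⟩, by simp⟩
  · rintro ⟨hx0, y, hy, z, ⟨δ, hδ0, rfl⟩, rfl⟩
    refine below_mem_hull hW hy hx0 ?_
    intro k
    have hz : (∑ j, δ j • (-(Pi.single j 1 : Fin n → ℝ))) k = -δ k := by
      rw [Finset.sum_apply]
      simp only [Pi.smul_apply, Pi.neg_apply, smul_eq_mul, mul_neg]
      rw [Finset.sum_eq_single k]
      · simp
      · intro b _ hb; simp [Pi.single_apply, hb]
      · simp
    simp only [Pi.add_apply, hz]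
    linarith [hδ0 k]
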